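/- Let b, ε be real numbers and m ≥ 1 an integer. Let g be a formal power series in one variable w over ℝ with constant coefficient 1 satisfying g² = 1 − b²·w². Then for every integer j with 0 ≤ j ≤ 2m+1, the coefficient of w^{2m+1−j} in the power series (1 − bεw)^{2m}·g equals C(2m, j−1)·(−bε)^{2m+1−j} + Σ_{n=1}^{⌊(2m+1−j)/2⌋} C(2m, 2n+j−1)·(−1)^j·((2n−2)!/(n!(n−1)!·2^{2n−1}))·ε^{2(m−n)+1−j}·b^{2m+1−j}, where C(2m, −1) is interpreted as 0. -/

import Mathlib

open PowerSeries Finset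

noncomputable def dd : ℕ → ℝ
  | 0 => 1
  | (k+1) => -(catalan k : ℝ) / 2 ^ (2*k+1)

lemma dd_zero : dd 0 = 1 := rfl
lemma dd_succ (k : ℕ) : dd (k+1) = -(catalan k : ℝ) / 2 ^ (2*k+1) := rfl

lemma sum_even_reindex (f : ℕ → ℝ) (L : ℕ) (hf : ∀ i, ¬ 2 ∣ i → f i = 0) :
    ∑ i ∈ Finset.range L, f i = ∑ t ∈ Finset.range ((L+1)/2), f (2*t) := by
  calc ∑ i ∈ Finset.range L, f i
      = ∑ i ∈ (Finset.range ((L+1)/2)).image (fun t => 2*t), f i := by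
        symm
        apply Finset.sum_subset
        · intro x hx
          simp only [Finset.mem_image, Finset.mem_range] at hx ⊢
          obtain ⟨t, ht, rfl⟩ := hx; omega
        · intro x hx hnx
          apply hf
          rintro ⟨t, rfl⟩
          apply hnx
          simp only [Finset.mem_image, Finset.mem_range] at hx ⊢
          exact ⟨t, by omega, by omega⟩
    _ = ∑ t ∈ Finset.range ((L+1)/2), f (2*t) :=
        Finset.sum_image (by intro x _ y _ h; simp only at h; omega)

lemma dd_sum (k : ℕ) :
    ∑ i ∈ Finset.range (k+1), dd i * dd (k - i) =
      if k = 0 then 1 else if k = 1 then -1 else 0 := by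
  match k with
  | 0 => simp [dd_zero]
  | 1 => norm_num [Finset.sum_range_succ, dd_zero, dd_succ]
  | (n+2) =>
    rw [Finset.sum_range_succ, Finset.sum_range_succ']
    have h1 : ∑ t ∈ Finset.range (n+1), dd (t+1) * dd (n + 2 - (t+1))
        = ∑ t ∈ Finset.range (n+1),
            (catalan t : ℝ) * (catalan (n - t) : ℝ) / 2 ^ (2*n+2) := by
      apply Finset.sum_congr rfl
      intro t ht
      simp only [Finset.mem_range] at ht
      have h2 : n + 2 - (t+1) = (n - t) + 1 := by omega
      rw [h2, dd_succ, dd_succ]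
      have h3 : (2:ℝ) ^ (2*t+1) * 2 ^ (2*(n-t)+1) = 2 ^ (2*n+2) := by
        rw [← pow_add]; congr 1; omega
      rw [div_mul_div_comm, h3]
      ring
    have h4 : ∑ t ∈ Finset.range (n+1),
        (catalan t : ℝ) * (catalan (n - t) : ℝ) / 2 ^ (2*n+2)
        = (catalan (n+1) : ℝ) / 2 ^ (2*n+2) := by
      rw [← Finset.sum_div]
      congr 1
      rw [catalan_succ']
      rw [Finset.Nat.sum_antidiagonal_eq_sum_range_succ (fun x y => catalan x * catalan y)]
      push_cast
      rfl
    rw [h1, h4]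
    have h5 : n + 2 - 0 = (n+1) + 1 := by omega
    have h7 : n + 2 - (n + 2) = 0 := by omega
    rw [h5, h7]
    simp only [dd_succ, dd_zero, show n+2 = (n+1)+1 from rfl]
    have h6 : (2:ℝ) ^ (2*(n+1)+1) = 2 * 2 ^ (2*n+2) := by
      rw [show 2*(n+1)+1 = (2*n+2)+1 by omega, pow_succ]; ring
    rw [h6]
    have hne : (2:ℝ) ^ (2*n+2) ≠ 0 := by positivity
    have : (n:ℕ) + 2 ≠ 0 := by omega
    simp only [this, if_false, show n + 2 ≠ 1 by omega]
    field_simp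
    ring

noncomputable def s0 : PowerSeries ℝ :=
  PowerSeries.mk (fun n => if 2 ∣ n then dd (n/2) else 0)

lemma coeff_s0 (n : ℕ) : coeff n s0 = if 2 ∣ n then dd (n/2) else 0 :=
  coeff_mk _ _

lemma s0_sq : s0 ^ 2 = 1 - PowerSeries.X ^ 2 := by
  ext N
  rw [pow_two, coeff_mul, Finset.Nat.sum_antidiagonal_eq_sum_range_succ_mk]
  have hrhs : coeff N (1 - PowerSeries.X ^ 2 : PowerSeries ℝ)
      = (if N = 0 then 1 else 0) - (if N = 2 then 1 else 0) := by
    rw [map_sub, coeff_one, coeff_X_pow]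
  rw [hrhs]
  have heven : ∀ i, ¬ 2 ∣ i → coeff i s0 * coeff (N - i) s0 = 0 := by
    intro i hi
    rw [coeff_s0, if_neg hi, zero_mul]
  rw [sum_even_reindex _ _ heven]
  rcases Nat.even_or_odd N with ⟨k, hk⟩ | ⟨k, hk⟩
  · subst hk
    have hL : (k + k + 1 + 1)/2 = k + 1 := by omega
    rw [hL]
    have : ∀ t ∈ Finset.range (k+1),
        coeff (2*t) s0 * coeff (k + k - 2*t) s0 = dd t * dd (k - t) := by
      intro t ht
      simp only [Finset.mem_range] at ht
      rw [coeff_s0, coeff_s0, if_pos ⟨t, rfl⟩, if_pos ⟨k - t, by omega⟩]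
      congr 2 <;> omega
    rw [Finset.sum_congr rfl this, dd_sum]
    rcases Nat.eq_zero_or_pos k with rfl | hk0
    · norm_num
    · rcases eq_or_ne k 1 with rfl | hk1
      · norm_num
      · rw [if_neg (by omega), if_neg hk1, if_neg (by omega), if_neg (by omega)]
        norm_num
  · subst hk
    rw [if_neg (by omega), if_neg (by omega)]
    rw [Finset.sum_eq_zero, sub_zero]
    intro t ht
    simp only [Finset.mem_range] at ht
    rw [coeff_s0 (2*k+1 - 2*t), if_neg (by omega), mul_zero]

lemma g_eq (b : ℝ) (g : PowerSeries ℝ) (hg0 : constantCoeff g = 1)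
    (hg : g ^ 2 = 1 - PowerSeries.C (b ^ 2) * PowerSeries.X ^ 2) :
    g = rescale b s0 := by
  have hsq : (rescale b s0) ^ 2 = g ^ 2 := by
    rw [hg, ← map_pow, s0_sq, map_sub, map_one, map_pow, rescale_X, mul_pow, ← map_pow]
  have h0 : constantCoeff (rescale b s0) = 1 := by
    rw [← coeff_zero_eq_constantCoeff, coeff_rescale, coeff_s0]
    norm_num [dd_zero]
  have hz : (g + rescale b s0) * (g - rescale b s0) = 0 := by
    rw [← sq_sub_sq, hsq, sub_self]
  rcases mul_eq_zero.mp hz with h | h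
  · exfalso
    have := congrArg (constantCoeff) h
    rw [map_add, hg0, h0] at this
    norm_num at this
  · exact sub_eq_zero.mp h

lemma coeff_one_sub_pow (a : ℝ) (M k : ℕ) :
    coeff k ((1 - PowerSeries.C a * PowerSeries.X) ^ M)
      = (M.choose k : ℝ) * (-a) ^ k := by
  have h1 : (1 - PowerSeries.C a * PowerSeries.X)
      = (PowerSeries.C (-a) * PowerSeries.X + 1) := by
    rw [map_neg]; ring
  rw [h1, add_pow]
  rw [map_sum]
  have h2 : ∀ i ∈ Finset.range (M+1),
      coeff k ((PowerSeries.C (-a) * PowerSeries.X) ^ i * 1 ^ (M - i) * (M.choose i : PowerSeries ℝ))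
        = if k = i then ((-a)^i * (M.choose i : ℝ)) else 0 := by
    intro i _
    rw [one_pow, mul_one, mul_pow, ← map_pow, ← map_natCast (PowerSeries.C) (M.choose i),
      mul_right_comm, ← map_mul, coeff_C_mul, coeff_X_pow, mul_ite, mul_one, mul_zero]
  rw [Finset.sum_congr rfl h2, Finset.sum_ite_eq (Finset.range (M+1)) k
    (fun i => (-a)^i * (M.choose i : ℝ))]
  by_cases hk : k ∈ Finset.range (M+1)
  · rw [if_pos hk]; ring
  · rw [if_neg hk]
    simp only [Finset.mem_range] at hk
    rw [Nat.choose_eq_zero_of_lt (by omega)]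
    norm_num

lemma fact_frac (t : ℕ) :
    ((2*t).factorial : ℝ) = (catalan t : ℝ) * (t+1).factorial * t.factorial := by
  have hnat : (2*t).factorial = catalan t * (t+1).factorial * t.factorial := by
    have h2 := Nat.choose_mul_factorial_mul_factorial (show t ≤ 2*t by omega)
    have hc : (2*t).choose t = Nat.centralBinom t := rfl
    have hcb := succ_mul_catalan_eq_centralBinom t
    rw [← h2, show 2*t - t = t from by omega, hc, ← hcb, Nat.factorial_succ]
    ring
  exact_mod_cast congrArg (Nat.cast : ℕ → ℝ) hnat

lemma neg_one_pow_congr' {p q : ℕ} (h : p % 2 = q % 2) : ((-1:ℝ))^p = (-1)^q := by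
  conv_lhs => rw [← Nat.div_add_mod p 2]
  conv_rhs => rw [← Nat.div_add_mod q 2]
  rw [pow_add, pow_add, pow_mul, pow_mul, h]
  norm_num

/-- Explicit formula for the critical potential V′_c(x) = Pol((x−bε)^{2m}√(x²−b²)):
writing w = 1/x and letting g be the power series with constant coefficient 1 and
g² = 1 − b²w², the coefficient of w^{2m+1−j} in (1 − bεw)^{2m}·g is
C(2m,j−1)(−bε)^{2m+1−j} + Σ_{n=1}^{⌊(2m+1−j)/2⌋} C(2m,2n+j−1)(−1)ʲ
((2n−2)!/(n!(n−1)!2^{2n−1})) ε^{2(m−n)+1−j} b^{2m+1−j}, with C(2m,−1) := 0. -/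
theorem critical_potential_coefficients (b ε : ℝ) (m : ℕ) (hm : 1 ≤ m)
    (g : PowerSeries ℝ) (hg0 : constantCoeff g = 1)
    (hg : g ^ 2 = 1 - PowerSeries.C (b ^ 2) * PowerSeries.X ^ 2)
    (j : ℕ) (hj : j ≤ 2 * m + 1) :
    coeff (2 * m + 1 - j)
        ((1 - PowerSeries.C (b * ε) * PowerSeries.X) ^ (2 * m) * g)
      = (if j = 0 then 0 else
          (Nat.choose (2 * m) (j - 1) : ℝ) * (-(b * ε)) ^ (2 * m + 1 - j))
        + ∑ n ∈ Finset.Icc 1 ((2 * m + 1 - j) / 2),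
            (Nat.choose (2 * m) (2 * n + j - 1) : ℝ) * (-1) ^ j *
              ((Nat.factorial (2 * n - 2) : ℝ) /
                ((Nat.factorial n : ℝ) * (Nat.factorial (n - 1) : ℝ) * 2 ^ (2 * n - 1))) *
              ε ^ (2 * (m - n) + 1 - j) * b ^ (2 * m + 1 - j) := by
  rw [g_eq b g hg0 hg]
  rw [mul_comm ((1 - PowerSeries.C (b * ε) * PowerSeries.X) ^ (2 * m)) (rescale b s0), coeff_mul,
    Finset.Nat.sum_antidiagonal_eq_sum_range_succ_mk]
  have heven : ∀ i, ¬ 2 ∣ i →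
      coeff i (rescale b s0) *
        coeff (2*m+1-j - i) ((1 - PowerSeries.C (b * ε) * PowerSeries.X) ^ (2 * m)) = 0 := by
    intro i hi
    rw [coeff_rescale, coeff_s0, if_neg hi, mul_zero, zero_mul]
  rw [sum_even_reindex _ _ heven]
  rw [show (2*m+1-j+1+1)/2 = (2*m+1-j)/2 + 1 from by omega]
  rw [show Finset.range ((2*m+1-j)/2 + 1) = insert 0 (Finset.Icc 1 ((2*m+1-j)/2)) from by
    ext x; simp only [Finset.mem_range, Finset.mem_insert, Finset.mem_Icc]; omega]
  rw [Finset.sum_insert (by simp)]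
  congr 1
  · -- the n = 0 term
    rw [Nat.mul_zero, Nat.sub_zero, coeff_rescale, coeff_s0, if_pos ⟨0, rfl⟩]
    rw [show (0:ℕ)/2 = 0 from rfl, dd_zero, pow_zero, one_mul, one_mul, coeff_one_sub_pow]
    rcases eq_or_ne j 0 with rfl | hj0
    · rw [if_pos rfl, Nat.choose_eq_zero_of_lt (by omega)]
      norm_num
    · rw [if_neg hj0, show 2*m+1-j = 2*m - (j-1) from by omega,
        Nat.choose_symm (by omega)]
  · apply Finset.sum_congr rfl
    intro n hn
    simp only [Finset.mem_Icc] at hn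
    obtain ⟨hn1, hn2⟩ := hn
    obtain ⟨t, rfl⟩ : ∃ t, n = t + 1 := ⟨n - 1, by omega⟩
    have h2n : 2*(t+1) ≤ 2*m+1-j := by omega
    have htm : t + 1 ≤ m := by omega
    rw [coeff_rescale, coeff_s0, if_pos ⟨t+1, by omega⟩,
      show (2*(t+1))/2 = t + 1 from by omega, dd_succ, coeff_one_sub_pow]
    set e := 2*m+1-j - 2*(t+1) with he
    have hch : (2*m).choose e = (2*m).choose (2*(t+1)+j-1) := by
      rw [show e = 2*m - (2*(t+1)+j-1) from by omega]
      exact Nat.choose_symm (by omega)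
    have hee : 2*(m-(t+1))+1-j = e := by omega
    have hfac : ((2*(t+1)-2).factorial : ℝ) /
        ((t+1).factorial * ((t+1)-1).factorial * 2^(2*(t+1)-1))
        = (catalan t : ℝ) / 2^(2*t+1) := by
      rw [show 2*(t+1)-2 = 2*t from by omega, show t+1-1 = t from by omega,
        show 2*(t+1)-1 = 2*t+1 from by omega, fact_frac]
      have ha : ((t+1).factorial : ℝ) ≠ 0 := by positivity
      have hb : ((t:ℕ).factorial : ℝ) ≠ 0 := by positivity
      field_simp
    have hsgn : ((-1:ℝ))^j = (-1)^e * (-1) := by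
      rw [← pow_succ]
      exact neg_one_pow_congr' (by omega)
    have hbpow : (b:ℝ)^(2*m+1-j) = b^(2*(t+1)) * b^e := by
      rw [← pow_add]; congr 1; omega
    rw [hfac, ← hch, hee, hbpow, hsgn, neg_pow (b*ε), mul_pow]
    ring
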